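/- Let L and K be quantum channels given by isometries, let p ∈ [0,2], assume H_p^min(L) > 0, H_p^min(K) > 0 and H_p^min(L⊗K) > 0, and set t = H_p^min(L)/(H_p^min(L)+H_p^min(K)). For a channel M given by an isometry, write α̂_p(M) = −log B_M / H_p^min(M), where B_M = min{‖C_M‖, ‖C_M^Γ‖, ‖C_{M^c}^Γ‖, ‖(V_M V_M*)^Γ‖, ‖M(I)‖}. Then α̂_p(L⊗K) ≤ v_p(L,K)·[t·α̂_p(L) + (1−t)·α̂_p(K)]. -/

import Mathlib

open scoped Kronecker ENNReal ComplexOrder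
open Matrix Filter

noncomputable section

/-- A quantum state: a positive semidefinite matrix of trace 1. -/
def IsState {A : Type*} [Fintype A] (X : Matrix A A ℂ) : Prop :=
  X.PosSemidef ∧ X.trace = 1

/-- The Choi matrix of a linear map between matrix algebras. -/
def choiMatrix {A B : Type*} [Fintype A] [DecidableEq A]
    (L : Matrix A A ℂ →ₗ[ℂ] Matrix B B ℂ) : Matrix (B × A) (B × A) ℂ :=
  ∑ i : A, ∑ j : A, (L (Matrix.single i j 1)) ⊗ₖ (Matrix.single i j 1)

/-- A quantum channel: a trace-preserving, completely positive linear map, the latter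
meaning that its Choi matrix is positive semidefinite. -/
def IsChannel {A B : Type*} [Fintype A] [DecidableEq A] [Fintype B]
    (L : Matrix A A ℂ →ₗ[ℂ] Matrix B B ℂ) : Prop :=
  (∀ X, (L X).trace = X.trace) ∧ (choiMatrix L).PosSemidef

/-- The p-Rényi entropy of a (Hermitian) matrix, p ∈ [0,∞]. -/
def renyiEntropy {B : Type*} [Fintype B] [DecidableEq B] (p : ℝ≥0∞)
    (X : Matrix B B ℂ) : ℝ :=
  if h : X.IsHermitian then
    if p = 0 then Real.log (Nat.card {i // h.eigenvalues i ≠ 0})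
    else if p = 1 then -∑ i, h.eigenvalues i * Real.log (h.eigenvalues i)
    else if p = ⊤ then -Real.log (⨆ i, h.eigenvalues i)
    else (1 - p.toReal)⁻¹ * Real.log (∑ i, (h.eigenvalues i) ^ p.toReal)
  else 0

/-- The minimum output p-Rényi entropy of a channel. -/
def minOutputEntropy {A B : Type*} [Fintype A] [Fintype B] [DecidableEq B] (p : ℝ≥0∞)
    (L : Matrix A A ℂ →ₗ[ℂ] Matrix B B ℂ) : ℝ :=
  ⨅ X : {X : Matrix A A ℂ // IsState X}, renyiEntropy p (L X.1)

/-- The r-fold tensor power of a linear map between matrix algebras, determined by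
Kronecker products of matrix units. -/
def tensorPow {A B : Type*} [Fintype A] [DecidableEq A] [Fintype B]
    (L : Matrix A A ℂ →ₗ[ℂ] Matrix B B ℂ) (r : ℕ) :
    Matrix (Fin r → A) (Fin r → A) ℂ →ₗ[ℂ] Matrix (Fin r → B) (Fin r → B) ℂ where
  toFun X := Matrix.of fun i j => ∑ a : Fin r → A, ∑ b : Fin r → A,
      X a b * ∏ m, L (Matrix.single (a m) (b m) 1) (i m) (j m)
  map_add' X Y := by
    ext i j
    simp [Matrix.add_apply, add_mul, Finset.sum_add_distrib]
  map_smul' c X := by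
    ext i j
    simp [Matrix.smul_apply, smul_eq_mul, Finset.mul_sum, mul_assoc]

/-- The tensor product of two linear maps between matrix algebras, determined by
Kronecker products: (L ⊗ K)(X ⊗ Y) = L(X) ⊗ K(Y). -/
def channelTensor {A B C D : Type*} [Fintype A] [DecidableEq A] [Fintype B]
    [Fintype C] [DecidableEq C] [Fintype D]
    (L : Matrix A A ℂ →ₗ[ℂ] Matrix B B ℂ) (K : Matrix C C ℂ →ₗ[ℂ] Matrix D D ℂ) :
    Matrix (A × C) (A × C) ℂ →ₗ[ℂ] Matrix (B × D) (B × D) ℂ where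
  toFun X := Matrix.of fun i j => ∑ a : A × C, ∑ b : A × C,
      X a b * (L (Matrix.single a.1 b.1 1) i.1 j.1
        * K (Matrix.single a.2 b.2 1) i.2 j.2)
  map_add' X Y := by
    ext i j
    simp [Matrix.add_apply, add_mul, Finset.sum_add_distrib]
  map_smul' c X := by
    ext i j
    simp [Matrix.smul_apply, smul_eq_mul, Finset.mul_sum, mul_assoc]

/-- The p-additivity rate of a channel. -/
def additivityRate {A B : Type*} [Fintype A] [DecidableEq A] [Fintype B] [DecidableEq B]
    (p : ℝ≥0∞) (L : Matrix A A ℂ →ₗ[ℂ] Matrix B B ℂ) : ℝ :=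
  sSup {a : ℝ | a ∈ Set.Icc (0 : ℝ) 1 ∧
    a * minOutputEntropy p L ≤
      Filter.liminf (fun r : ℕ => minOutputEntropy p (tensorPow L r) / r) Filter.atTop}

/-- The operator norm (the norm induced by the ℓ² Euclidean norm) of a matrix. -/
def opNorm {A : Type*} [Fintype A] [DecidableEq A] (M : Matrix A A ℂ) : ℝ :=
  ‖Matrix.toEuclideanCLM (𝕜 := ℂ) M‖

/-- Partial trace over the first tensor factor. -/
def ptraceFst {N K : Type*} [Fintype N] (M : Matrix (N × K) (N × K) ℂ) : Matrix K K ℂ :=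
  Matrix.of fun i j => ∑ a : N, M (a, i) (a, j)

/-- Partial trace over the second tensor factor. -/
def ptraceSnd {N K : Type*} [Fintype K] (M : Matrix (N × K) (N × K) ℂ) : Matrix N N ℂ :=
  Matrix.of fun i j => ∑ b : K, M (i, b) (j, b)

/-- Partial transposition of the second tensor factor. -/
def ptranspose {B Q : Type*} (M : Matrix (B × Q) (B × Q) ℂ) : Matrix (B × Q) (B × Q) ℂ :=
  Matrix.of fun p q => M (p.1, q.2) (q.1, p.2)

/-- The quantum channel associated to an isometry V : ℂ^d → ℂ^n ⊗ ℂ^k,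
X ↦ [Tr_n ⊗ id_k](V X V*). -/
def channelOfIsometry {N K D : Type*} [Fintype N] [Fintype K] [Fintype D]
    (V : Matrix (N × K) D ℂ) : Matrix D D ℂ →ₗ[ℂ] Matrix K K ℂ where
  toFun X := ptraceFst (V * X * Vᴴ)
  map_add' X Y := by
    ext i j
    simp [ptraceFst, Matrix.mul_add, Matrix.add_mul, Finset.sum_add_distrib]
  map_smul' c X := by
    ext i j
    simp [ptraceFst, Matrix.mul_smul, Matrix.smul_mul, Finset.mul_sum]

/-- The complementary channel associated to an isometry V : ℂ^d → ℂ^n ⊗ ℂ^k,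
X ↦ [id_n ⊗ Tr_k](V X V*). -/
def compChannelOfIsometry {N K D : Type*} [Fintype N] [Fintype K] [Fintype D]
    (V : Matrix (N × K) D ℂ) : Matrix D D ℂ →ₗ[ℂ] Matrix N N ℂ where
  toFun X := ptraceSnd (V * X * Vᴴ)
  map_add' X Y := by
    ext i j
    simp [ptraceSnd, Matrix.mul_add, Matrix.add_mul, Finset.sum_add_distrib]
  map_smul' c X := by
    ext i j
    simp [ptraceSnd, Matrix.mul_smul, Matrix.smul_mul, Finset.mul_sum]

/-- The Kronecker product of two isometries, regrouped so that the environment factors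
come first and the output factors second. -/
def isometryTensor {N₁ K₁ D₁ N₂ K₂ D₂ : Type*}
    (V₁ : Matrix (N₁ × K₁) D₁ ℂ) (V₂ : Matrix (N₂ × K₂) D₂ ℂ) :
    Matrix ((N₁ × N₂) × (K₁ × K₂)) (D₁ × D₂) ℂ :=
  Matrix.of fun p c => V₁ (p.1.1, p.2.1) c.1 * V₂ (p.1.2, p.2.2) c.2

end

noncomputable section

/-- The lower bound α̂_p(M) = −log B_M / H_p^min(M) for a quantum channel given by an
isometry, where B_M is the minimum of the five additive bounds. -/
def hatAlpha {N K D : Type*}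
    [Fintype N] [DecidableEq N] [Fintype K] [DecidableEq K] [Fintype D] [DecidableEq D]
    (p : ℝ≥0∞) (V : Matrix (N × K) D ℂ) : ℝ :=
  -(Real.log (min (min (min (min
      (opNorm (choiMatrix (channelOfIsometry V)))
      (opNorm (ptranspose (choiMatrix (channelOfIsometry V)))))
      (opNorm (ptranspose (choiMatrix (compChannelOfIsometry V)))))
      (opNorm (ptranspose (V * Vᴴ))))
      (opNorm (channelOfIsometry V 1)))) /
    minOutputEntropy p (channelOfIsometry V)


section AuxLemmas

open Matrix

lemma aux_mulVec_factor {α β γ : Type*} [Fintype α] [Fintype β] [Fintype γ]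
    (e : γ ≃ α × β) (A : Matrix α α ℂ) (B : Matrix β β ℂ) (M : Matrix γ γ ℂ)
    (hM : ∀ x y, M x y = A (e x).1 (e y).1 * B (e x).2 (e y).2)
    (x : α → ℂ) (y : β → ℂ) (g : γ) :
    (M *ᵥ fun g' => x (e g').1 * y (e g').2) g = (A *ᵥ x) (e g).1 * (B *ᵥ y) (e g).2 := by
  simp only [mulVec, dotProduct, hM]
  rw [Fintype.sum_mul_sum, ← Fintype.sum_prod_type']
  exact Fintype.sum_equiv e _ _ (fun g' => by ring)

lemma aux_euclid_norm_factor {α β γ : Type*} [Fintype α] [Fintype β] [Fintype γ]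
    (e : γ ≃ α × β) (x : α → ℂ) (y : β → ℂ) :
    ‖((WithLp.equiv 2 (γ → ℂ)).symm (fun g => x (e g).1 * y (e g).2))‖
      = ‖((WithLp.equiv 2 (α → ℂ)).symm x)‖ * ‖((WithLp.equiv 2 (β → ℂ)).symm y)‖ := by
  simp only [EuclideanSpace.norm_eq, WithLp.equiv_symm_apply, PiLp.toLp_apply]
  rw [← Real.sqrt_mul (by positivity), Fintype.sum_mul_sum, ← Fintype.sum_prod_type']
  congr 1
  exact Fintype.sum_equiv e _ _ (fun g => by simp [norm_mul, mul_pow])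

lemma toEuclideanCLM_piLp_equiv_symm {α : Type*} [Fintype α] [DecidableEq α]
    (A : Matrix α α ℂ) (x : α → ℂ) :
    toEuclideanCLM (𝕜 := ℂ) A ((WithLp.equiv 2 (α → ℂ)).symm x)
      = (WithLp.equiv 2 (α → ℂ)).symm (toLin' A x) := rfl

lemma aux_opNorm_mul_le_factor {α β γ : Type*} [Fintype α] [DecidableEq α] [Fintype β]
    [DecidableEq β] [Fintype γ] [DecidableEq γ]
    (e : γ ≃ α × β) (A : Matrix α α ℂ) (B : Matrix β β ℂ) (M : Matrix γ γ ℂ)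
    (hM : ∀ x y, M x y = A (e x).1 (e y).1 * B (e x).2 (e y).2) :
    opNorm A * opNorm B ≤ opNorm M := by
  have key : ∀ (x : α → ℂ) (y : β → ℂ),
      ‖toEuclideanCLM (𝕜 := ℂ) A ((WithLp.equiv 2 (α → ℂ)).symm x)‖ *
        ‖toEuclideanCLM (𝕜 := ℂ) B ((WithLp.equiv 2 (β → ℂ)).symm y)‖ ≤
      opNorm M * (‖((WithLp.equiv 2 (α → ℂ)).symm x)‖ * ‖((WithLp.equiv 2 (β → ℂ)).symm y)‖) := by
    intro x y
    have h1 := (toEuclideanCLM (𝕜 := ℂ) M).le_opNorm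
      ((WithLp.equiv 2 (γ → ℂ)).symm (fun g => x (e g).1 * y (e g).2))
    rw [toEuclideanCLM_piLp_equiv_symm, toLin'_apply, aux_euclid_norm_factor e] at h1
    have h2 : (M *ᵥ fun g' => x (e g').1 * y (e g').2)
        = fun g => (A *ᵥ x) (e g).1 * (B *ᵥ y) (e g).2 :=
      funext (aux_mulVec_factor e A B M hM x y)
    rw [h2, aux_euclid_norm_factor e] at h1
    rw [toEuclideanCLM_piLp_equiv_symm, toEuclideanCLM_piLp_equiv_symm, toLin'_apply,
      toLin'_apply]
    exact h1
  rcases le_or_gt (opNorm B) 0 with hB | hB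
  · have hB0 : opNorm B = 0 := le_antisymm hB (norm_nonneg _)
    rw [hB0, mul_zero]
    exact norm_nonneg _
  · rw [show opNorm A * opNorm B ≤ opNorm M ↔ opNorm A ≤ opNorm M / opNorm B from
      (le_div_iff₀ hB).symm]
    refine ContinuousLinearMap.opNorm_le_bound _ (div_nonneg (norm_nonneg _) hB.le) fun x => ?_
    rw [div_mul_eq_mul_div, le_div_iff₀ hB]
    rcases eq_or_lt_of_le (norm_nonneg (toEuclideanCLM (𝕜 := ℂ) A x)) with hAx | hAx
    · rw [← hAx, zero_mul]
      exact mul_nonneg (norm_nonneg (Matrix.toEuclideanCLM (𝕜 := ℂ) M)) (norm_nonneg _)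
    · have hBle : opNorm B ≤ opNorm M * ‖x‖ / ‖toEuclideanCLM (𝕜 := ℂ) A x‖ := by
        refine ContinuousLinearMap.opNorm_le_bound _ (div_nonneg (mul_nonneg
          (norm_nonneg (Matrix.toEuclideanCLM (𝕜 := ℂ) M)) (norm_nonneg _)) (norm_nonneg _))
          fun y => ?_
        rw [div_mul_eq_mul_div, le_div_iff₀ hAx]
        calc ‖toEuclideanCLM (𝕜 := ℂ) B y‖ * ‖toEuclideanCLM (𝕜 := ℂ) A x‖
            = ‖toEuclideanCLM (𝕜 := ℂ) A ((WithLp.equiv 2 (α → ℂ)).symm (fun a => x a))‖ *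
              ‖toEuclideanCLM (𝕜 := ℂ) B ((WithLp.equiv 2 (β → ℂ)).symm (fun b => y b))‖ := by
              rw [mul_comm]; rfl
          _ ≤ opNorm M * (‖(WithLp.equiv 2 (α → ℂ)).symm (fun a => x a)‖ *
              ‖(WithLp.equiv 2 (β → ℂ)).symm (fun b => y b)‖) := key _ _
          _ = opNorm M * ‖x‖ * ‖y‖ := by rw [mul_assoc]; rfl
      calc ‖toEuclideanCLM (𝕜 := ℂ) A x‖ * opNorm B
          ≤ ‖toEuclideanCLM (𝕜 := ℂ) A x‖ * (opNorm M * ‖x‖ / ‖toEuclideanCLM (𝕜 := ℂ) A x‖) :=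
            mul_le_mul_of_nonneg_left hBle (norm_nonneg _)
        _ = opNorm M * ‖x‖ := by field_simp

section Entries
variable {N K D : Type*} [Fintype N] [Fintype K] [Fintype D] [DecidableEq D]

lemma aux_choi_apply {A B : Type*} [Fintype A] [DecidableEq A]
    (L : Matrix A A ℂ →ₗ[ℂ] Matrix B B ℂ) (x y : B × A) :
    choiMatrix L x y = L (Matrix.single x.2 y.2 1) x.1 y.1 := by
  simp [choiMatrix, Matrix.sum_apply, Matrix.kroneckerMap_apply, Matrix.single,
    Finset.sum_ite_eq, ite_and]

lemma aux_channel_std (V : Matrix (N × K) D ℂ) (a b : D) (i j : K) :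
    channelOfIsometry V (Matrix.single a b 1) i j
      = ∑ n : N, V (n, i) a * star (V (n, j) b) := by
  simp [channelOfIsometry, ptraceFst, Matrix.mul_apply, Matrix.conjTranspose_apply,
    Matrix.single, ite_and, Finset.sum_ite_eq]

lemma aux_comp_std (V : Matrix (N × K) D ℂ) (a b : D) (m m' : N) :
    compChannelOfIsometry V (Matrix.single a b 1) m m'
      = ∑ k : K, V (m, k) a * star (V (m', k) b) := by
  simp [compChannelOfIsometry, ptraceSnd, Matrix.mul_apply, Matrix.conjTranspose_apply,
    Matrix.single, ite_and, Finset.sum_ite_eq]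

lemma aux_channel_one (V : Matrix (N × K) D ℂ) (i j : K) :
    channelOfIsometry V 1 i j = ∑ n : N, ∑ d : D, V (n, i) d * star (V (n, j) d) := by
  simp [channelOfIsometry, ptraceFst, Matrix.mul_apply, Matrix.conjTranspose_apply,
    Matrix.one_apply, mul_ite, mul_one, mul_zero, Finset.sum_ite_eq]

lemma aux_mul_conjT_apply (V : Matrix (N × K) D ℂ) (p q : N × K) :
    (V * Vᴴ) p q = ∑ d : D, V p d * star (V q d) := by
  simp [Matrix.mul_apply, Matrix.conjTranspose_apply]

lemma aux_trace_ptranspose {B Q : Type*} [Fintype B] [Fintype Q]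
    (M : Matrix (B × Q) (B × Q) ℂ) : (ptranspose M).trace = M.trace := by
  simp [ptranspose, Matrix.trace, Matrix.diag]

lemma aux_opNorm_pos_of_trace_ne {A : Type*} [Fintype A] [DecidableEq A]
    (M : Matrix A A ℂ) (h : M.trace ≠ 0) : 0 < opNorm M := by
  have hM : M ≠ 0 := fun h0 => h (by simp [h0])
  rw [opNorm, norm_pos_iff]
  intro hc
  exact hM (by simpa using congrArg (toEuclideanCLM (n := A) (𝕜 := ℂ)).symm hc)

lemma aux_isometry_col_sum (V : Matrix (N × K) D ℂ) (hV : Vᴴ * V = 1) (d : D) :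
    ∑ p : N × K, V p d * star (V p d) = 1 := by
  have h := congrFun (congrFun hV d) d
  simp only [Matrix.mul_apply, Matrix.conjTranspose_apply, Matrix.one_apply_eq] at h
  rw [← h]
  exact Finset.sum_congr rfl fun p _ => mul_comm _ _

lemma aux_trace_choi (V : Matrix (N × K) D ℂ) (hV : Vᴴ * V = 1) :
    (choiMatrix (channelOfIsometry V)).trace = (Fintype.card D : ℂ) := by
  have h : (choiMatrix (channelOfIsometry V)).trace
      = ∑ x : K × D, ∑ n : N, V (n, x.1) x.2 * star (V (n, x.1) x.2) := by
    simp [Matrix.trace, Matrix.diag, aux_choi_apply, aux_channel_std]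
  rw [h, Fintype.sum_prod_type, Finset.sum_comm]
  have h2 : ∀ d : D, ∑ k : K, ∑ n : N, V (n, k) d * star (V (n, k) d) = 1 := by
    intro d
    rw [← aux_isometry_col_sum V hV d, Fintype.sum_prod_type]
    exact Finset.sum_comm
  rw [Finset.sum_congr rfl fun d _ => h2 d]
  simp

lemma aux_trace_choi_comp (V : Matrix (N × K) D ℂ) (hV : Vᴴ * V = 1) :
    (choiMatrix (compChannelOfIsometry V)).trace = (Fintype.card D : ℂ) := by
  have h : (choiMatrix (compChannelOfIsometry V)).trace
      = ∑ x : N × D, ∑ k : K, V (x.1, k) x.2 * star (V (x.1, k) x.2) := by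
    simp [Matrix.trace, Matrix.diag, aux_choi_apply, aux_comp_std]
  rw [h, Fintype.sum_prod_type, Finset.sum_comm]
  have h2 : ∀ d : D, ∑ n : N, ∑ k : K, V (n, k) d * star (V (n, k) d) = 1 := by
    intro d
    rw [← aux_isometry_col_sum V hV d, Fintype.sum_prod_type]
  rw [Finset.sum_congr rfl fun d _ => h2 d]
  simp

lemma aux_trace_VVh (V : Matrix (N × K) D ℂ) (hV : Vᴴ * V = 1) :
    (V * Vᴴ).trace = (Fintype.card D : ℂ) := by
  rw [Matrix.trace_mul_comm, hV, Matrix.trace_one]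

lemma aux_trace_chan_one (V : Matrix (N × K) D ℂ) (hV : Vᴴ * V = 1) :
    (channelOfIsometry V 1).trace = (Fintype.card D : ℂ) := by
  have h : (channelOfIsometry V 1).trace
      = ∑ k : K, ∑ n : N, ∑ d : D, V (n, k) d * star (V (n, k) d) := by
    simp [Matrix.trace, Matrix.diag, aux_channel_one]
  rw [h]
  have h1 : ∀ k : K, ∀ n : N, ∑ d : D, V (n, k) d * star (V (n, k) d)
      = ∑ d : D, V (n, k) d * star (V (n, k) d) := fun _ _ => rfl
  rw [Finset.sum_comm]
  have h2 : (∑ n : N, ∑ k : K, ∑ d : D, V (n, k) d * star (V (n, k) d))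
      = ∑ d : D, ∑ n : N, ∑ k : K, V (n, k) d * star (V (n, k) d) := by
    rw [Finset.sum_congr rfl fun n (_ : n ∈ Finset.univ) =>
      (Finset.sum_comm : ∑ k : K, ∑ d : D, V (n, k) d * star (V (n, k) d)
        = ∑ d : D, ∑ k : K, V (n, k) d * star (V (n, k) d))]
    exact Finset.sum_comm
  rw [h2]
  have h3 : ∀ d : D, ∑ n : N, ∑ k : K, V (n, k) d * star (V (n, k) d) = 1 := by
    intro d
    rw [← aux_isometry_col_sum V hV d, Fintype.sum_prod_type]
  rw [Finset.sum_congr rfl fun d _ => h3 d]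
  simp

end Entries

section Factor
variable {N₁ K₁ D₁ N₂ K₂ D₂ : Type*}
    [Fintype N₁] [DecidableEq N₁] [Fintype K₁] [DecidableEq K₁]
    [Fintype D₁] [DecidableEq D₁]
    [Fintype N₂] [DecidableEq N₂] [Fintype K₂] [DecidableEq K₂]
    [Fintype D₂] [DecidableEq D₂]
    (V : Matrix (N₁ × K₁) D₁ ℂ) (W : Matrix (N₂ × K₂) D₂ ℂ)

lemma aux_choi_tensor_factor (x y : (K₁ × K₂) × (D₁ × D₂)) :
    choiMatrix (channelOfIsometry (isometryTensor V W)) x y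
      = choiMatrix (channelOfIsometry V) (x.1.1, x.2.1) (y.1.1, y.2.1)
        * choiMatrix (channelOfIsometry W) (x.1.2, x.2.2) (y.1.2, y.2.2) := by
  rw [aux_choi_apply, aux_choi_apply, aux_choi_apply, aux_channel_std, aux_channel_std,
    aux_channel_std]
  rw [Fintype.sum_mul_sum, ← Fintype.sum_prod_type']
  refine Finset.sum_congr rfl fun n _ => ?_
  simp only [isometryTensor, Matrix.of_apply, star_mul']
  ring

lemma aux_comp_tensor_factor (x y : (N₁ × N₂) × (D₁ × D₂)) :
    choiMatrix (compChannelOfIsometry (isometryTensor V W)) x y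
      = choiMatrix (compChannelOfIsometry V) (x.1.1, x.2.1) (y.1.1, y.2.1)
        * choiMatrix (compChannelOfIsometry W) (x.1.2, x.2.2) (y.1.2, y.2.2) := by
  rw [aux_choi_apply, aux_choi_apply, aux_choi_apply, aux_comp_std, aux_comp_std, aux_comp_std]
  rw [Fintype.sum_mul_sum, ← Fintype.sum_prod_type']
  refine Finset.sum_congr rfl fun k _ => ?_
  simp only [isometryTensor, Matrix.of_apply, star_mul']
  ring

lemma aux_mulVV_tensor_factor (x y : (N₁ × N₂) × (K₁ × K₂)) :
    (isometryTensor V W * (isometryTensor V W)ᴴ) x y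
      = (V * Vᴴ) (x.1.1, x.2.1) (y.1.1, y.2.1) * (W * Wᴴ) (x.1.2, x.2.2) (y.1.2, y.2.2) := by
  rw [aux_mul_conjT_apply, aux_mul_conjT_apply, aux_mul_conjT_apply]
  rw [Fintype.sum_mul_sum, ← Fintype.sum_prod_type']
  refine Finset.sum_congr rfl fun d _ => ?_
  simp only [isometryTensor, Matrix.of_apply, star_mul']
  ring

lemma aux_channel_one_tensor_factor (x y : K₁ × K₂) :
    channelOfIsometry (isometryTensor V W) 1 x y
      = channelOfIsometry V 1 x.1 y.1 * channelOfIsometry W 1 x.2 y.2 := by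
  rw [aux_channel_one, aux_channel_one, aux_channel_one]
  rw [Fintype.sum_mul_sum]
  have h : ∀ n : N₁ × N₂, ∑ d : D₁ × D₂,
      isometryTensor V W (n, x) d * star (isometryTensor V W (n, y) d)
      = (∑ d₁ : D₁, V (n.1, x.1) d₁ * star (V (n.1, y.1) d₁))
        * (∑ d₂ : D₂, W (n.2, x.2) d₂ * star (W (n.2, y.2) d₂)) := by
    intro n
    rw [Fintype.sum_mul_sum, ← Fintype.sum_prod_type']
    refine Finset.sum_congr rfl fun d _ => ?_
    simp only [isometryTensor, Matrix.of_apply, star_mul']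
    ring
  rw [Fintype.sum_congr _ _ h, ← Fintype.sum_prod_type']

end Factor

lemma aux_min5_mul_le {a₁ a₂ a₃ a₄ a₅ b₁ b₂ b₃ b₄ b₅ c₁ c₂ c₃ c₄ c₅ : ℝ}
    (ha₁ : 0 ≤ a₁) (ha₂ : 0 ≤ a₂) (ha₃ : 0 ≤ a₃) (ha₄ : 0 ≤ a₄) (ha₅ : 0 ≤ a₅)
    (hb : 0 ≤ min (min (min (min b₁ b₂) b₃) b₄) b₅)
    (h₁ : a₁ * b₁ ≤ c₁) (h₂ : a₂ * b₂ ≤ c₂) (h₃ : a₃ * b₃ ≤ c₃) (h₄ : a₄ * b₄ ≤ c₄)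
    (h₅ : a₅ * b₅ ≤ c₅) :
    (min (min (min (min a₁ a₂) a₃) a₄) a₅) * (min (min (min (min b₁ b₂) b₃) b₄) b₅)
      ≤ min (min (min (min c₁ c₂) c₃) c₄) c₅ := by
  have A4 : min (min (min (min a₁ a₂) a₃) a₄) a₅ ≤ min (min (min a₁ a₂) a₃) a₄ :=
    min_le_left _ _
  have A3 : min (min (min (min a₁ a₂) a₃) a₄) a₅ ≤ min (min a₁ a₂) a₃ :=
    A4.trans (min_le_left _ _)
  have A2 : min (min (min (min a₁ a₂) a₃) a₄) a₅ ≤ min a₁ a₂ := A3.trans (min_le_left _ _)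
  have B4 : min (min (min (min b₁ b₂) b₃) b₄) b₅ ≤ min (min (min b₁ b₂) b₃) b₄ :=
    min_le_left _ _
  have B3 : min (min (min (min b₁ b₂) b₃) b₄) b₅ ≤ min (min b₁ b₂) b₃ :=
    B4.trans (min_le_left _ _)
  have B2 : min (min (min (min b₁ b₂) b₃) b₄) b₅ ≤ min b₁ b₂ := B3.trans (min_le_left _ _)
  refine le_min (le_min (le_min (le_min ?_ ?_) ?_) ?_) ?_
  · exact (mul_le_mul (A2.trans (min_le_left _ _)) (B2.trans (min_le_left _ _)) hb ha₁).trans h₁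
  · exact (mul_le_mul (A2.trans (min_le_right _ _)) (B2.trans (min_le_right _ _)) hb ha₂).trans h₂
  · exact (mul_le_mul (A3.trans (min_le_right _ _)) (B3.trans (min_le_right _ _)) hb ha₃).trans h₃
  · exact (mul_le_mul (A4.trans (min_le_right _ _)) (B4.trans (min_le_right _ _)) hb ha₄).trans h₄
  · exact (mul_le_mul (min_le_right _ _) (min_le_right _ _) hb ha₅).trans h₅

end AuxLemmas

/-- convex-like behaviour of the lower bounds α̂_p with respect to tensor
products: α̂_p(L⊗K) ≤ v_p(L,K)·[t·α̂_p(L) + (1−t)·α̂_p(K)]. -/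
theorem hatAlpha_tensor_le {N₁ K₁ D₁ N₂ K₂ D₂ : Type*}
    [Fintype N₁] [DecidableEq N₁] [Fintype K₁] [DecidableEq K₁]
    [Fintype D₁] [DecidableEq D₁]
    [Fintype N₂] [DecidableEq N₂] [Fintype K₂] [DecidableEq K₂]
    [Fintype D₂] [DecidableEq D₂]
    (V : Matrix (N₁ × K₁) D₁ ℂ) (W : Matrix (N₂ × K₂) D₂ ℂ)
    (hV : Vᴴ * V = 1) (hW : Wᴴ * W = 1) (p : ℝ≥0∞) (hp : p ≤ 2)
    (hHL : 0 < minOutputEntropy p (channelOfIsometry V))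
    (hHK : 0 < minOutputEntropy p (channelOfIsometry W))
    (hHLK : 0 < minOutputEntropy p (channelOfIsometry (isometryTensor V W))) :
    hatAlpha p (isometryTensor V W) ≤
      ((minOutputEntropy p (channelOfIsometry V) +
            minOutputEntropy p (channelOfIsometry W)) /
          minOutputEntropy p (channelOfIsometry (isometryTensor V W))) *
        ((minOutputEntropy p (channelOfIsometry V) /
              (minOutputEntropy p (channelOfIsometry V) +
                minOutputEntropy p (channelOfIsometry W))) * hatAlpha p V +
          (1 - minOutputEntropy p (channelOfIsometry V) /
              (minOutputEntropy p (channelOfIsometry V) +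
                minOutputEntropy p (channelOfIsometry W))) * hatAlpha p W) := by
  have hD₁ : Nonempty D₁ := by
    by_contra h
    rw [not_nonempty_iff] at h
    haveI := h
    haveI he : IsEmpty {X : Matrix D₁ D₁ ℂ // IsState X} := ⟨fun X => by
      have ht := X.2.2
      simp [Matrix.trace] at ht⟩
    rw [minOutputEntropy, Real.iInf_of_isEmpty] at hHL
    exact lt_irrefl 0 hHL
  have hD₂ : Nonempty D₂ := by
    by_contra h
    rw [not_nonempty_iff] at h
    haveI := h
    haveI he : IsEmpty {X : Matrix D₂ D₂ ℂ // IsState X} := ⟨fun X => by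
      have ht := X.2.2
      simp [Matrix.trace] at ht⟩
    rw [minOutputEntropy, Real.iInf_of_isEmpty] at hHK
    exact lt_irrefl 0 hHK
  haveI := hD₁
  haveI := hD₂
  have hcard₁ : (Fintype.card D₁ : ℂ) ≠ 0 := Nat.cast_ne_zero.mpr Fintype.card_ne_zero
  have hcard₂ : (Fintype.card D₂ : ℂ) ≠ 0 := Nat.cast_ne_zero.mpr Fintype.card_ne_zero
  -- positivity of the five bounds for V and for W
  have pa1 : 0 < opNorm (choiMatrix (channelOfIsometry V)) :=
    aux_opNorm_pos_of_trace_ne _ (by rw [aux_trace_choi V hV]; exact hcard₁)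
  have pa2 : 0 < opNorm (ptranspose (choiMatrix (channelOfIsometry V))) :=
    aux_opNorm_pos_of_trace_ne _ (by rw [aux_trace_ptranspose, aux_trace_choi V hV]; exact hcard₁)
  have pa3 : 0 < opNorm (ptranspose (choiMatrix (compChannelOfIsometry V))) :=
    aux_opNorm_pos_of_trace_ne _
      (by rw [aux_trace_ptranspose, aux_trace_choi_comp V hV]; exact hcard₁)
  have pa4 : 0 < opNorm (ptranspose (V * Vᴴ)) :=
    aux_opNorm_pos_of_trace_ne _ (by rw [aux_trace_ptranspose, aux_trace_VVh V hV]; exact hcard₁)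
  have pa5 : 0 < opNorm (channelOfIsometry V 1) :=
    aux_opNorm_pos_of_trace_ne _ (by rw [aux_trace_chan_one V hV]; exact hcard₁)
  have pb1 : 0 < opNorm (choiMatrix (channelOfIsometry W)) :=
    aux_opNorm_pos_of_trace_ne _ (by rw [aux_trace_choi W hW]; exact hcard₂)
  have pb2 : 0 < opNorm (ptranspose (choiMatrix (channelOfIsometry W))) :=
    aux_opNorm_pos_of_trace_ne _ (by rw [aux_trace_ptranspose, aux_trace_choi W hW]; exact hcard₂)
  have pb3 : 0 < opNorm (ptranspose (choiMatrix (compChannelOfIsometry W))) :=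
    aux_opNorm_pos_of_trace_ne _
      (by rw [aux_trace_ptranspose, aux_trace_choi_comp W hW]; exact hcard₂)
  have pb4 : 0 < opNorm (ptranspose (W * Wᴴ)) :=
    aux_opNorm_pos_of_trace_ne _ (by rw [aux_trace_ptranspose, aux_trace_VVh W hW]; exact hcard₂)
  have pb5 : 0 < opNorm (channelOfIsometry W 1) :=
    aux_opNorm_pos_of_trace_ne _ (by rw [aux_trace_chan_one W hW]; exact hcard₂)
  -- multiplicative lower bounds for the tensor product channel
  have c1 : opNorm (choiMatrix (channelOfIsometry V)) * opNorm (choiMatrix (channelOfIsometry W))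
      ≤ opNorm (choiMatrix (channelOfIsometry (isometryTensor V W))) :=
    aux_opNorm_mul_le_factor (Equiv.prodProdProdComm K₁ K₂ D₁ D₂) _ _ _
      (fun x y => aux_choi_tensor_factor V W x y)
  have c2 : opNorm (ptranspose (choiMatrix (channelOfIsometry V)))
        * opNorm (ptranspose (choiMatrix (channelOfIsometry W)))
      ≤ opNorm (ptranspose (choiMatrix (channelOfIsometry (isometryTensor V W)))) :=
    aux_opNorm_mul_le_factor (Equiv.prodProdProdComm K₁ K₂ D₁ D₂) _ _ _
      (fun x y => by
        simp only [ptranspose, Matrix.of_apply]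
        exact aux_choi_tensor_factor V W _ _)
  have c3 : opNorm (ptranspose (choiMatrix (compChannelOfIsometry V)))
        * opNorm (ptranspose (choiMatrix (compChannelOfIsometry W)))
      ≤ opNorm (ptranspose (choiMatrix (compChannelOfIsometry (isometryTensor V W)))) :=
    aux_opNorm_mul_le_factor (Equiv.prodProdProdComm N₁ N₂ D₁ D₂) _ _ _
      (fun x y => by
        simp only [ptranspose, Matrix.of_apply]
        exact aux_comp_tensor_factor V W _ _)
  have c4 : opNorm (ptranspose (V * Vᴴ)) * opNorm (ptranspose (W * Wᴴ))
      ≤ opNorm (ptranspose (isometryTensor V W * (isometryTensor V W)ᴴ)) :=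
    aux_opNorm_mul_le_factor (Equiv.prodProdProdComm N₁ N₂ K₁ K₂) _ _ _
      (fun x y => by
        simp only [ptranspose, Matrix.of_apply]
        exact aux_mulVV_tensor_factor V W _ _)
  have c5 : opNorm (channelOfIsometry V 1) * opNorm (channelOfIsometry W 1)
      ≤ opNorm (channelOfIsometry (isometryTensor V W) 1) :=
    aux_opNorm_mul_le_factor (Equiv.refl (K₁ × K₂)) _ _ _
      (fun x y => aux_channel_one_tensor_factor V W x y)
  simp only [hatAlpha]
  set HL := minOutputEntropy p (channelOfIsometry V) with hHLdef
  set HK := minOutputEntropy p (channelOfIsometry W) with hHKdef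
  set H := minOutputEntropy p (channelOfIsometry (isometryTensor V W)) with hHdef
  set BL := min (min (min (min (opNorm (choiMatrix (channelOfIsometry V)))
      (opNorm (ptranspose (choiMatrix (channelOfIsometry V)))))
      (opNorm (ptranspose (choiMatrix (compChannelOfIsometry V)))))
      (opNorm (ptranspose (V * Vᴴ)))) (opNorm (channelOfIsometry V 1)) with hBLdef
  set BK := min (min (min (min (opNorm (choiMatrix (channelOfIsometry W)))
      (opNorm (ptranspose (choiMatrix (channelOfIsometry W)))))
      (opNorm (ptranspose (choiMatrix (compChannelOfIsometry W)))))
      (opNorm (ptranspose (W * Wᴴ)))) (opNorm (channelOfIsometry W 1)) with hBKdef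
  set BT := min (min (min (min (opNorm (choiMatrix (channelOfIsometry (isometryTensor V W))))
      (opNorm (ptranspose (choiMatrix (channelOfIsometry (isometryTensor V W))))))
      (opNorm (ptranspose (choiMatrix (compChannelOfIsometry (isometryTensor V W))))))
      (opNorm (ptranspose (isometryTensor V W * (isometryTensor V W)ᴴ))))
      (opNorm (channelOfIsometry (isometryTensor V W) 1)) with hBTdef
  have hBLpos : 0 < BL := lt_min (lt_min (lt_min (lt_min pa1 pa2) pa3) pa4) pa5
  have hBKpos : 0 < BK := lt_min (lt_min (lt_min (lt_min pb1 pb2) pb3) pb4) pb5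
  have hBT : BL * BK ≤ BT :=
    aux_min5_mul_le pa1.le pa2.le pa3.le pa4.le pa5.le hBKpos.le c1 c2 c3 c4 c5
  have hlog : Real.log BL + Real.log BK ≤ Real.log BT := by
    rw [← Real.log_mul hBLpos.ne' hBKpos.ne']
    exact Real.log_le_log (mul_pos hBLpos hBKpos) hBT
  have hSne : HL + HK ≠ 0 := by positivity
  have hr : (HL + HK) / H * (HL / (HL + HK) * (-Real.log BL / HL)
        + (1 - HL / (HL + HK)) * (-Real.log BK / HK))
      = (-Real.log BL - Real.log BK) / H := by
    field_simp
    ring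
  rw [hr]
  have hnum : -Real.log BT ≤ -Real.log BL - Real.log BK := by linarith
  exact div_le_div_of_nonneg_right hnum hHLK.le

end
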